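/- (Multivariate Hurwitz theorem) Let D be a domain (open connected set) in ℂⁿ and let {f_k}_{k=1}^∞ be a sequence of analytic functions on D, each non-vanishing on D, that converges to a function f uniformly on compact subsets of D. Then f is either non-vanishing on D or identically zero on D. -/

import Mathlib

open Filter Metric Set

/-- One-variable Hurwitz at a point: if nonvanishing holomorphic functions converge
uniformly on compacts of an open set `U ⊆ ℂ` to `g`, and `g t₀ = 0`, then `g`
vanishes in a neighborhood of `t₀`. -/
lemma hurwitz_one_var {U : Set ℂ} (hU : IsOpen U) {G : ℕ → ℂ → ℂ} {g : ℂ → ℂ}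
    (hG : ∀ k, DifferentiableOn ℂ (G k) U) (hnv : ∀ k, ∀ t ∈ U, G k t ≠ 0)
    (hconv : ∀ K : Set ℂ, K ⊆ U → IsCompact K → TendstoUniformlyOn G g atTop K)
    {t₀ : ℂ} (ht₀ : t₀ ∈ U) (h0 : g t₀ = 0) : ∀ᶠ t in nhds t₀, g t = 0 := by
  have hloc : TendstoLocallyUniformlyOn G g atTop U := by
    rw [tendstoLocallyUniformlyOn_iff_forall_isCompact hU]
    exact fun K hK hKc => hconv K hK hKc
  have hgdiff : DifferentiableOn ℂ g U :=
    hloc.differentiableOn (Filter.Eventually.of_forall hG) hU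
  have hga : AnalyticAt ℂ g t₀ :=
    (hgdiff.analyticOnNhd hU) t₀ ht₀
  rcases hga.eventually_eq_zero_or_eventually_ne_zero with h | h
  · exact h
  · exfalso
    rw [eventually_nhdsWithin_iff] at h
    obtain ⟨ε, hε, hεball⟩ := Metric.eventually_nhds_iff_ball.mp h
    obtain ⟨ρ₀, hρ₀, hρ₀ball⟩ := Metric.isOpen_iff.mp hU t₀ ht₀
    set ρ : ℝ := min (ε / 2) (ρ₀ / 2) with hρdef
    have hρ : 0 < ρ := lt_min (by linarith) (by linarith)
    have hsub : closedBall t₀ ρ ⊆ U := by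
      intro x hx
      apply hρ₀ball
      have := mem_closedBall.mp hx
      exact mem_ball.mpr (lt_of_le_of_lt this (by simp [hρdef]; right; linarith))
    have hsph : sphere t₀ ρ ⊆ U := sphere_subset_closedBall.trans hsub
    -- g is nonzero on the sphere
    have hgsph : ∀ t ∈ sphere t₀ ρ, g t ≠ 0 := by
      intro t ht
      have hd : dist t t₀ = ρ := mem_sphere.mp ht
      apply hεball
      · exact mem_ball.mpr (by rw [hd]; exact lt_of_le_of_lt (min_le_left _ _) (by linarith))
      · intro hteq; rw [hteq] at hd; simp at hd; exact absurd hd.symm (ne_of_gt hρ)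
    -- minimum of ‖g‖ on sphere
    have hsphc : IsCompact (sphere t₀ ρ) := isCompact_sphere _ _
    have hsphne : (sphere t₀ ρ).Nonempty := NormedSpace.sphere_nonempty.mpr hρ.le
    have hgc : ContinuousOn g (sphere t₀ ρ) := (hgdiff.continuousOn).mono hsph
    obtain ⟨tm, htm, htmin⟩ := hsphc.exists_isMinOn hsphne (hgc.norm)
    set m : ℝ := ‖g tm‖ with hm
    have hmpos : 0 < m := norm_pos_iff.mpr (hgsph tm htm)
    -- uniform convergence on the closed ball
    have huc := hconv (closedBall t₀ ρ) hsub (isCompact_closedBall _ _)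
    rw [Metric.tendstoUniformlyOn_iff] at huc
    obtain ⟨k, hk⟩ := (huc (m / 2) (by linarith)).exists
    -- on sphere, ‖G k‖ ≥ m/2
    have hGk_sph : ∀ t ∈ sphere t₀ ρ, m / 2 ≤ ‖G k t‖ := by
      intro t ht
      have h1 : dist (g t) (G k t) < m / 2 := hk t (sphere_subset_closedBall ht)
      have h2 : m ≤ ‖g t‖ := htmin ht
      have h3 : ‖g t‖ - ‖G k t‖ ≤ ‖g t - G k t‖ := norm_sub_norm_le _ _
      rw [dist_eq_norm] at h1
      linarith
    -- max modulus for (G k)⁻¹ on the ball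
    have hinv : DifferentiableOn ℂ (fun t => (G k t)⁻¹) (closedBall t₀ ρ) :=
      ((hG k).mono hsub).inv (fun t ht => hnv k t (hsub ht))
    have hdcc : DiffContOnCl ℂ (fun t => (G k t)⁻¹) (ball t₀ ρ) := by
      apply DifferentiableOn.diffContOnCl
      rwa [closure_ball t₀ (ne_of_gt hρ)]
    have hbd : ∀ t ∈ frontier (ball t₀ ρ), ‖(G k t)⁻¹‖ ≤ 2 / m := by
      rw [frontier_ball t₀ (ne_of_gt hρ)]
      intro t ht
      rw [norm_inv]
      rw [inv_le_comm₀ (norm_pos_iff.mpr (hnv k t (hsph ht))) (by positivity)]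
      calc (2 / m)⁻¹ = m / 2 := by rw [inv_div]
        _ ≤ ‖G k t‖ := hGk_sph t ht
    have hmax := Complex.norm_le_of_forall_mem_frontier_norm_le
      isBounded_ball hdcc hbd
      (subset_closure (mem_ball_self hρ))
    -- so ‖G k t₀‖ ≥ m/2
    have hGk0 : m / 2 ≤ ‖G k t₀‖ := by
      rw [norm_inv] at hmax
      have hne : G k t₀ ≠ 0 := hnv k t₀ ht₀
      have hpos : 0 < ‖G k t₀‖ := norm_pos_iff.mpr hne
      rw [inv_le_comm₀ hpos (by positivity)] at hmax
      calc m / 2 = (2 / m)⁻¹ := by rw [inv_div]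
        _ ≤ ‖G k t₀‖ := hmax
    -- but G k t₀ is close to g t₀ = 0
    have hclose : dist (g t₀) (G k t₀) < m / 2 := hk t₀ (mem_closedBall_self hρ.le)
    rw [h0, dist_eq_norm, zero_sub, norm_neg] at hclose
    linarith
open Filter Metric Set

/-- If `f` vanishes at `z₀ ∈ D`, it vanishes on a ball around `z₀`. -/
lemma hurwitz_local (n : ℕ) (D : Set (Fin n → ℂ))
    (hopen : IsOpen D)
    (F : ℕ → (Fin n → ℂ) → ℂ) (f : (Fin n → ℂ) → ℂ)
    (hhol : ∀ k, DifferentiableOn ℂ (F k) D)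
    (hnv : ∀ k, ∀ z ∈ D, F k z ≠ 0)
    (hconv : ∀ K : Set (Fin n → ℂ), K ⊆ D → IsCompact K →
      TendstoUniformlyOn F f Filter.atTop K)
    {z₀ : Fin n → ℂ} (hz₀ : z₀ ∈ D) (hf0 : f z₀ = 0) :
    ∃ r > 0, ball z₀ r ⊆ D ∧ ∀ w ∈ ball z₀ r, f w = 0 := by
  obtain ⟨r₀, hr₀, hball₀⟩ := Metric.isOpen_iff.mp hopen z₀ hz₀
  refine ⟨r₀ / 3, by linarith, fun x hx => hball₀ (ball_subset_ball (by linarith) hx), ?_⟩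
  intro w hw
  rcases eq_or_ne w z₀ with rfl | hwne
  · exact hf0
  set v : Fin n → ℂ := w - z₀ with hv
  have hvne : v ≠ 0 := sub_ne_zero.mpr hwne
  have hvnorm : 0 < ‖v‖ := norm_pos_iff.mpr hvne
  have hvlt : ‖v‖ < r₀ / 3 := by simpa [hv, dist_eq_norm] using hw
  set φ : ℂ → (Fin n → ℂ) := fun t => z₀ + t • v with hφ
  have hφdiff : Differentiable ℂ φ := by
    apply Differentiable.const_add
    exact differentiable_id.smul_const v
  set Ul : Set ℂ := φ ⁻¹' D with hUl
  have hUlopen : IsOpen Ul := hopen.preimage hφdiff.continuous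
  set R : ℝ := (r₀ / 3 * 2) / ‖v‖ with hR
  have hR2 : 2 < R := by
    rw [hR, lt_div_iff₀ hvnorm]
    linarith
  have hballUl : ball (0 : ℂ) R ⊆ Ul := by
    intro t ht
    have htn : ‖t‖ < R := by simpa [dist_eq_norm] using ht
    apply hball₀
    have : ‖φ t - z₀‖ = ‖t‖ * ‖v‖ := by simp [hφ, norm_smul]
    rw [mem_ball, dist_eq_norm, this]
    calc ‖t‖ * ‖v‖ < R * ‖v‖ := by
          exact mul_lt_mul_of_pos_right htn hvnorm
      _ = r₀ / 3 * 2 := by rw [hR]; field_simp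
      _ < r₀ := by linarith
  set G : ℕ → ℂ → ℂ := fun k => F k ∘ φ with hG
  set g : ℂ → ℂ := f ∘ φ with hg
  have hGdiff : ∀ k, DifferentiableOn ℂ (G k) Ul :=
    fun k => (hhol k).comp hφdiff.differentiableOn (mapsTo_preimage φ D)
  have hGnv : ∀ k, ∀ t ∈ Ul, G k t ≠ 0 := fun k t ht => hnv k (φ t) ht
  have hGconv : ∀ K : Set ℂ, K ⊆ Ul → IsCompact K →
      TendstoUniformlyOn G g atTop K := by
    intro K hK hKc
    have himg : φ '' K ⊆ D := image_subset_iff.mpr hK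
    have hic : IsCompact (φ '' K) := hKc.image hφdiff.continuous
    have := (hconv (φ '' K) himg hic).comp φ
    exact this.mono (subset_preimage_image φ K)
  have h0Ul : (0 : ℂ) ∈ Ul := hballUl (mem_ball_self (by linarith))
  have hg0 : g 0 = 0 := by simp [hg, hφ, hf0]
  have hev : ∀ᶠ t in nhds (0 : ℂ), g t = 0 :=
    hurwitz_one_var hUlopen hGdiff hGnv hGconv h0Ul hg0
  -- identity theorem on ball 0 R
  have hloc : TendstoLocallyUniformlyOn G g atTop Ul := by
    rw [tendstoLocallyUniformlyOn_iff_forall_isCompact hUlopen]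
    exact fun K hK hKc => hGconv K hK hKc
  have hgdiff : DifferentiableOn ℂ g Ul :=
    hloc.differentiableOn (Filter.Eventually.of_forall hGdiff) hUlopen
  have hga : AnalyticOnNhd ℂ g (ball (0 : ℂ) R) :=
    (hgdiff.mono hballUl).analyticOnNhd isOpen_ball
  have heq : EqOn g 0 (ball (0 : ℂ) R) := by
    apply hga.eqOn_zero_of_preconnected_of_eventuallyEq_zero
      (convex_ball (0 : ℂ) R).isPreconnected (mem_ball_self (by linarith))
    exact hev.mono fun t ht => ht
  have h1 : (1 : ℂ) ∈ ball (0 : ℂ) R := by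
    rw [mem_ball, dist_eq_norm]; simp; linarith
  have := heq h1
  simpa [hg, hφ, hv] using this

/-- Multivariate Hurwitz theorem: let `D` be a domain (open connected set) in
`ℂⁿ` and let `(F k)` be a sequence of analytic functions on `D`, each
non-vanishing on `D`, converging to `f` uniformly on compact subsets of `D`.
Then `f` is either non-vanishing on `D` or identically zero on `D`. -/
theorem multivariate_hurwitz (n : ℕ) (D : Set (Fin n → ℂ))
    (hopen : IsOpen D) (hconn : IsConnected D)
    (F : ℕ → (Fin n → ℂ) → ℂ) (f : (Fin n → ℂ) → ℂ)
    (hhol : ∀ k, DifferentiableOn ℂ (F k) D)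
    (hnv : ∀ k, ∀ z ∈ D, F k z ≠ 0)
    (hconv : ∀ K : Set (Fin n → ℂ), K ⊆ D → IsCompact K →
      TendstoUniformlyOn F f Filter.atTop K) :
    (∀ z ∈ D, f z ≠ 0) ∨ (∀ z ∈ D, f z = 0) := by
  -- f is continuous at every point of D
  have hcont : ∀ z ∈ D, ContinuousAt f z := by
    intro z hz
    obtain ⟨δ, hδ, hδball⟩ := Metric.isOpen_iff.mp hopen z hz
    have hsub : closedBall z (δ / 2) ⊆ D :=
      (closedBall_subset_ball (by linarith)).trans hδball
    have hcf : ContinuousOn f (closedBall z (δ / 2)) :=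
      (hconv _ hsub (isCompact_closedBall _ _)).continuousOn
        (Filter.Eventually.of_forall fun k => ((hhol k).mono hsub).continuousOn).frequently
    exact hcf.continuousAt (closedBall_mem_nhds z (by linarith))
  -- the two open sets
  set Z : Set (Fin n → ℂ) := {z | z ∈ D ∧ f z = 0} with hZ
  set N : Set (Fin n → ℂ) := {z | z ∈ D ∧ f z ≠ 0} with hN
  have hZopen : IsOpen Z := by
    rw [isOpen_iff_mem_nhds]
    rintro z ⟨hzD, hz0⟩
    obtain ⟨r, hr, hrD, hrz⟩ := hurwitz_local n D hopen F f hhol hnv hconv hzD hz0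
    filter_upwards [ball_mem_nhds z hr] with w hw
    exact ⟨hrD hw, hrz w hw⟩
  have hNopen : IsOpen N := by
    rw [isOpen_iff_mem_nhds]
    rintro z ⟨hzD, hz0⟩
    filter_upwards [hopen.mem_nhds hzD, (hcont z hzD).eventually_ne hz0] with w hw hw'
    exact ⟨hw, hw'⟩
  have hdisj : Disjoint Z N := by
    rw [Set.disjoint_iff]
    rintro z ⟨⟨_, h0⟩, ⟨_, hne⟩⟩
    exact hne h0
  have hcover : D ⊆ Z ∪ N := by
    intro z hz
    by_cases h : f z = 0
    · exact Or.inl ⟨hz, h⟩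
    · exact Or.inr ⟨hz, h⟩
  rcases hconn.isPreconnected.subset_or_subset hZopen hNopen hdisj hcover with h | h
  · exact Or.inr fun z hz => (h hz).2
  · exact Or.inl fun z hz => (h hz).2
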